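/- (Kato intertwining) Let H(s) be a C¹ family of bounded self-adjoint operators with a C¹ family of orthogonal projections P₀(s) commuting with H(s) (P₀(s)H(s) = H(s)P₀(s)). Let U_K(t) solve i dU_K/dt = K(t)U_K(t), U_K(0) = I, where K(t) = H(εt) + iε[Ṗ₀(εt), P₀(εt)]. Then P₀(εt)U_K(t) = U_K(t)P₀(0) for all t ≥ 0. -/

import Mathlib

open ContinuousLinearMap

/-- **Kato intertwining.** Let `H(s)` be a `C¹` family of bounded
self-adjoint operators with a `C¹` family of orthogonal projections `P₀(s)` commuting
with `H(s)`, and let `U_K` solve `i dU_K/dt = K(t) U_K(t)`, `U_K(0) = 1`, with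
`K(t) = H(εt) + iε[Ṗ₀(εt), P₀(εt)]`.  Then `P₀(εt) U_K(t) = U_K(t) P₀(0)` for `t ≥ 0`. -/
theorem kato_intertwining
    {E : Type*} [NormedAddCommGroup E] [InnerProductSpace ℂ E] [CompleteSpace E]
    (ε : ℝ) (hε : 0 < ε)
    (H P P' : ℝ → E →L[ℂ] E)
    (hHcont : Continuous H) (hP'cont : Continuous P')
    (hHsa : ∀ s, IsSelfAdjoint (H s))
    (hPsa : ∀ s, IsSelfAdjoint (P s))
    (hPproj : ∀ s, P s ∘L P s = P s)
    (hPderiv : ∀ s, HasDerivAt P (P' s) s)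
    (hcomm : ∀ s, P s ∘L H s = H s ∘L P s)
    (K : ℝ → E →L[ℂ] E)
    (hK : ∀ t, K t = H (ε * t) +
      (Complex.I * (ε : ℂ)) • (P' (ε * t) ∘L P (ε * t) - P (ε * t) ∘L P' (ε * t)))
    (UK : ℝ → E →L[ℂ] E) (hUK0 : UK 0 = 1)
    (hUK : ∀ t, HasDerivAt UK (-Complex.I • (K t ∘L UK t)) t) :
    ∀ t ≥ (0 : ℝ), P (ε * t) ∘L UK t = UK t ∘L P 0 := by
  -- rewrite everything with ring multiplication
  simp only [← ContinuousLinearMap.mul_def] at hPproj hcomm hK hUK ⊢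
  -- Leibniz rule for P² = P gives P' = P P' + P' P
  have hLeib : ∀ s, P' s = P s * P' s + P' s * P s := by
    intro s
    have h1 : HasDerivAt (fun u => P u * P u) (P' s * P s + P s * P' s) s :=
      (hPderiv s).mul (hPderiv s)
    have h2 : (fun u => P u * P u) = P := funext hPproj
    rw [h2] at h1
    exact ((hPderiv s).unique h1).trans (add_comm _ _)
  -- P P' P = 0
  have hPPP : ∀ s, P s * P' s * P s = 0 := by
    intro s
    have h := congrArg (fun A => P s * A) (hLeib s)
    simp only [mul_add, ← mul_assoc, hPproj] at h
    exact (left_eq_add.mp h)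
  -- Key commutator identity:  K t * P (εt) - P (εt) * K t = (I ε) • P' (εt)
  have hkey : ∀ t, K t * P (ε * t) - P (ε * t) * K t
      = (Complex.I * (ε : ℂ)) • P' (ε * t) := by
    intro t
    set s := ε * t with hs
    set A := P s with hA
    set B := P' s with hB
    rw [hK t, ← hs]
    have e1 : B * A * A = B * A := by rw [mul_assoc, hPproj]
    have e2 : A * B * A = 0 := hPPP s
    have e3 : A * (A * B) = A * B := by rw [← mul_assoc, hPproj]
    have expand : (H s + (Complex.I * (ε : ℂ)) • (B * A - A * B)) * A
        - A * (H s + (Complex.I * (ε : ℂ)) • (B * A - A * B))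
        = (H s * A - A * H s)
          + (Complex.I * (ε : ℂ)) • ((B * A - A * B) * A - A * (B * A - A * B)) := by
      simp only [add_mul, mul_add, sub_mul, mul_sub, smul_mul_assoc, mul_smul_comm, smul_sub]
      abel
    rw [expand, hcomm s, sub_self, zero_add]
    congr 1
    have h4 : (B * A - A * B) * A = B * A := by
      rw [sub_mul, e1, e2, sub_zero]
    have h5 : A * (B * A - A * B) = -(A * B) := by
      rw [mul_sub, ← mul_assoc, e2, e3, zero_sub]
    rw [h4, h5, sub_neg_eq_add, add_comm]
    exact (hLeib s).symm
  -- The difference W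
  set W : ℝ → E →L[ℂ] E := fun t => P (ε * t) * UK t - UK t * P 0 with hWdef
  have hW0 : W 0 = 0 := by
    simp [hWdef, hUK0, mul_zero]
  -- W satisfies W' = -I • (K t * W t)
  have hWderiv : ∀ t, HasDerivAt W (-Complex.I • (K t * W t)) t := by
    intro t
    have hPe : HasDerivAt (fun u => P (ε * u)) (ε • P' (ε * t)) t := by
      have h := HasDerivAt.scomp (x := t) (hPderiv (ε * t))
        ((hasDerivAt_id t).const_mul ε)
      simp only [mul_one, id] at h
      exact h
    have h1 : HasDerivAt (fun u => P (ε * u) * UK u)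
        ((ε • P' (ε * t)) * UK t + P (ε * t) * (-Complex.I • (K t * UK t))) t :=
      hPe.mul (hUK t)
    have h2 : HasDerivAt (fun u => UK u * P 0)
        ((-Complex.I • (K t * UK t)) * P 0 + UK t * 0) t :=
      (hUK t).mul (hasDerivAt_const t (P 0))
    have h3 := h1.sub h2
    refine h3.congr_deriv ?_
    symm
    rw [mul_zero, add_zero]
    set s := ε * t with hs
    have hkey' := hkey t
    rw [← hs] at hkey'
    have hKP : K t * P s = P s * K t + (Complex.I * (ε : ℂ)) • P' s := by
      rw [← hkey']; abel
    have hWt : W t = P s * UK t - UK t * P 0 := rfl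
    have hIc : (-Complex.I) * (Complex.I * (ε : ℂ)) = (ε : ℂ) := by
      rw [neg_mul, ← mul_assoc, Complex.I_mul_I]; ring
    have eA : -Complex.I • (K t * (P s * UK t))
        = P s * (-Complex.I • (K t * UK t)) + ε • P' s * UK t := by
      rw [← mul_assoc, hKP, add_mul, smul_add, mul_assoc, ← mul_smul_comm,
        smul_mul_assoc, smul_smul, hIc, ← smul_mul_assoc, Complex.coe_smul, smul_mul_assoc ε (P' s) (UK t)]
    have eB : -Complex.I • (K t * (UK t * P 0)) = (-Complex.I • (K t * UK t)) * P 0 := by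
      rw [← mul_assoc, smul_mul_assoc]
    rw [hWt, mul_sub, smul_sub, eA, eB]
    abel
  -- continuity of K
  have hPcont : Continuous P :=
    continuous_iff_continuousAt.mpr fun s => (hPderiv s).continuousAt
  have hKcont : Continuous K := by
    rw [funext hK]
    have h1 : Continuous fun t : ℝ => ε * t := continuous_const.mul continuous_id
    fun_prop
  -- Grönwall uniqueness on [0, b]
  intro b hb
  obtain ⟨C, hC⟩ := isCompact_Icc.exists_bound_of_continuousOn
    (hKcont.continuousOn (s := Set.Icc (0:ℝ) b))
  set τ : ℝ → ℝ := fun t => min (max t 0) b with hτ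
  have hτmem : ∀ t, τ t ∈ Set.Icc (0:ℝ) b := fun t =>
    ⟨le_min (le_max_right t 0) hb, min_le_right _ _⟩
  have hτeq : ∀ t ∈ Set.Ico (0:ℝ) b, τ t = t := by
    intro t ht
    simp only [hτ]
    rw [max_eq_left ht.1, min_eq_left ht.2.le]
  set v : ℝ → (E →L[ℂ] E) → (E →L[ℂ] E) := fun t X => -Complex.I • (K (τ t) * X) with hv
  have lip : ∀ t, LipschitzWith C.toNNReal (v t) := by
    intro t
    apply LipschitzWith.of_dist_le_mul
    intro x y
    rw [dist_eq_norm, dist_eq_norm, hv]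
    have : -Complex.I • (K (τ t) * x) - -Complex.I • (K (τ t) * y)
        = -Complex.I • (K (τ t) * (x - y)) := by
      rw [mul_sub, smul_sub]
    rw [this, norm_smul]
    simp only [norm_neg, Complex.norm_I, one_mul]
    calc ‖K (τ t) * (x - y)‖ ≤ ‖K (τ t)‖ * ‖x - y‖ := norm_mul_le _ _
      _ ≤ (C.toNNReal : ℝ) * ‖x - y‖ := by
          apply mul_le_mul_of_nonneg_right _ (norm_nonneg _)
          exact (hC _ (hτmem t)).trans (Real.le_coe_toNNReal C)
  have key := ODE_solution_unique_of_mem_Icc_right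
    (v := v) (s := fun _ => Set.univ) (K := C.toNNReal)
    (fun t _ => (lip t).lipschitzOnWith)
    (f := W) (g := fun _ => 0) (a := 0) (b := b)
    (fun t _ => (hWderiv t).continuousAt.continuousWithinAt)
    (by
      intro t ht
      have : v t (W t) = -Complex.I • (K t * W t) := by
        rw [hv]; simp only []; rw [hτeq t ht]
      rw [this]
      exact (hWderiv t).hasDerivWithinAt)
    (fun t _ => Set.mem_univ _)
    continuousOn_const
    (by
      intro t ht
      have : v t 0 = 0 := by rw [hv]; simp
      rw [this]
      exact (hasDerivAt_const t (0 : E →L[ℂ] E)).hasDerivWithinAt)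
    (fun t _ => Set.mem_univ _)
    (by simpa using hW0)
  have hWb : W b = 0 := key ⟨hb, le_refl b⟩
  have : P (ε * b) * UK b - UK b * P 0 = 0 := hWb
  exact sub_eq_zero.mp this
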